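/- arXiv:2210.14265 — 5 statements merged into one kernel-verified Lean document; each statement's English description precedes it below -/
import Mathlib

section
/- There is no ℂ-linear map f : ℂ² → ℂ² ⊗ ℂ² such that f ψ = ψ ⊗ ψ for every unit vector ψ ∈ ℂ². In other words, the cloning transformation ψ ↦ ψ ⊗ ψ on quantum states of one qubit cannot be realized by any linear map. -/
open scoped TensorProduct

/-- Bilinear map picking coordinates `i`, `j`. -/
noncomputable def coordBil (i j : Fin 2) :
    EuclideanSpace ℂ (Fin 2) →ₗ[ℂ] EuclideanSpace ℂ (Fin 2) →ₗ[ℂ] ℂ :=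
  LinearMap.mk₂ ℂ (fun x y => x i * y j)
    (by intro m₁ m₂ n; simp [add_mul])
    (by intro c m n; simp; ring)
    (by intro m n₁ n₂; simp [mul_add])
    (by intro c m n; simp; ring)

/-- **No-cloning theorem** (Wootters–Zurek, Dieks, Park): there is no `ℂ`-linear map
`f : ℂ² → ℂ² ⊗ ℂ²` such that `f ψ = ψ ⊗ ψ` for every unit vector (qubit state) `ψ ∈ ℂ²`. -/
theorem no_cloning_linear :
    ¬ ∃ f : EuclideanSpace ℂ (Fin 2) →ₗ[ℂ]
        TensorProduct ℂ (EuclideanSpace ℂ (Fin 2)) (EuclideanSpace ℂ (Fin 2)),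
      ∀ ψ : EuclideanSpace ℂ (Fin 2), ‖ψ‖ = 1 → f ψ = ψ ⊗ₜ[ℂ] ψ := by
  rintro ⟨f, hf⟩
  set e0 : EuclideanSpace ℂ (Fin 2) := EuclideanSpace.single 0 1 with he0def
  set e1 : EuclideanSpace ℂ (Fin 2) := EuclideanSpace.single 1 1 with he1def
  have he0 : ‖e0‖ = 1 := by simp [he0def]
  have he1 : ‖e1‖ = 1 := by simp [he1def]
  set c : ℂ := (Real.sqrt 2 : ℂ)⁻¹ with hcdef
  have hc0 : c ≠ 0 := by
    simp [hcdef, Complex.ofReal_ne_zero, Real.sqrt_ne_zero']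
  set ψ : EuclideanSpace ℂ (Fin 2) := c • (e0 + e1) with hψdef
  have hψnorm : ‖ψ‖ = 1 := by
    rw [hψdef, norm_smul]
    have h2 : ‖e0 + e1‖ = Real.sqrt 2 := by
      rw [EuclideanSpace.norm_eq]
      congr 1
      rw [Fin.sum_univ_two]
      simp [he0def, he1def, EuclideanSpace.single_apply]; norm_num
    rw [h2, hcdef]
    have : ‖((Real.sqrt 2 : ℝ) : ℂ)⁻¹‖ = (Real.sqrt 2)⁻¹ := by
      rw [norm_inv, Complex.norm_real, Real.norm_eq_abs,
        abs_of_nonneg (Real.sqrt_nonneg 2)]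
    rw [this, inv_mul_cancel₀ (by positivity)]
  set g := TensorProduct.lift (coordBil 0 1) with hgdef
  have key := congrArg g (hf ψ hψnorm)
  have hfψ : f ψ = c • (e0 ⊗ₜ[ℂ] e0 + e1 ⊗ₜ[ℂ] e1) := by
    rw [hψdef, map_smul, map_add, hf e0 he0, hf e1 he1]
  rw [hfψ] at key
  have hg : ∀ x y : EuclideanSpace ℂ (Fin 2), g (x ⊗ₜ[ℂ] y) = x 0 * y 1 := by
    intro x y; simp [hgdef, coordBil]
  have lhs : g (c • (e0 ⊗ₜ[ℂ] e0 + e1 ⊗ₜ[ℂ] e1)) = 0 := by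
    rw [map_smul, map_add, hg, hg]
    simp [he0def, he1def, EuclideanSpace.single_apply]
  have rhs : g (ψ ⊗ₜ[ℂ] ψ) = c * c := by
    rw [hg, hψdef]
    simp [he0def, he1def, EuclideanSpace.single_apply]
  rw [lhs, rhs] at key
  exact hc0 (by simpa [mul_self_eq_zero] using key.symm)
end

section
/- Let e₀, e₁ be the standard basis vectors of ℂ² and let ψ₊ = (e₀ + e₁)/√2. There is no ℂ-linear map f : ℂ² → ℂ² ⊗ ℂ² satisfying simultaneously f e₀ = e₀ ⊗ e₀, f e₁ = e₁ ⊗ e₁, and f ψ₊ = ψ₊ ⊗ ψ₊. (Indeed, linearity applied to the first two equations forces f ψ₊ = (e₀ ⊗ e₀ + e₁ ⊗ e₁)/√2 ≠ ψ₊ ⊗ ψ₊.) -/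
open scoped TensorProduct

/-- The standard basis vector `|0⟩` of `ℂ²`. -/
noncomputable def qubit0 : EuclideanSpace ℂ (Fin 2) := EuclideanSpace.single 0 1

/-- The standard basis vector `|1⟩` of `ℂ²`. -/
noncomputable def qubit1 : EuclideanSpace ℂ (Fin 2) := EuclideanSpace.single 1 1

/-- The state `|+⟩ = (|0⟩ + |1⟩)/√2`. -/
noncomputable def qubitPlus : EuclideanSpace ℂ (Fin 2) :=
  ((Real.sqrt 2 : ℂ))⁻¹ • (qubit0 + qubit1)

/-- Coefficient functional `x ⊗ y ↦ x 0 * y 1`. -/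
noncomputable def coeff01 :
    TensorProduct ℂ (EuclideanSpace ℂ (Fin 2)) (EuclideanSpace ℂ (Fin 2)) →ₗ[ℂ] ℂ :=
  TensorProduct.lift
    (LinearMap.mk₂ ℂ (fun x y => x 0 * y 1)
      (by intro x x' y; simp [add_mul])
      (by intro c x y; simp [mul_assoc])
      (by intro x y y'; simp [mul_add])
      (by intro c x y; simp; ring))

@[simp] lemma coeff01_tmul (x y : EuclideanSpace ℂ (Fin 2)) :
    coeff01 (x ⊗ₜ[ℂ] y) = x 0 * y 1 := rfl

/-- The explicit witness in the paper's proof of the no-cloning theorem: no `ℂ`-linear map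
`f : ℂ² → ℂ² ⊗ ℂ²` simultaneously clones `|0⟩`, `|1⟩` and `|+⟩`. -/
theorem no_cloning_witness :
    ¬ ∃ f : EuclideanSpace ℂ (Fin 2) →ₗ[ℂ]
        TensorProduct ℂ (EuclideanSpace ℂ (Fin 2)) (EuclideanSpace ℂ (Fin 2)),
      f qubit0 = qubit0 ⊗ₜ[ℂ] qubit0 ∧
      f qubit1 = qubit1 ⊗ₜ[ℂ] qubit1 ∧
      f qubitPlus = qubitPlus ⊗ₜ[ℂ] qubitPlus := by
  rintro ⟨f, h0, h1, hp⟩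
  have hc : ((Real.sqrt 2 : ℂ))⁻¹ ≠ 0 := by
    simp [Real.sqrt_eq_zero']
  have key : coeff01 (f qubitPlus) = coeff01 (qubitPlus ⊗ₜ[ℂ] qubitPlus) := by rw [hp]
  have left : coeff01 (f qubitPlus) = 0 := by
    rw [qubitPlus, map_smul, map_add, h0, h1]
    simp [qubit0, qubit1, EuclideanSpace.single_apply]
  have right : coeff01 (qubitPlus ⊗ₜ[ℂ] qubitPlus) =
      ((Real.sqrt 2 : ℂ))⁻¹ * ((Real.sqrt 2 : ℂ))⁻¹ := by
    simp [qubitPlus, qubit0, qubit1, coeff01_tmul, EuclideanSpace.single_apply,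
      PiLp.smul_apply, PiLp.add_apply, smul_eq_mul]
  rw [left, right] at key
  exact hc (mul_self_eq_zero.mp key.symm)
end

section
/- Let H be a finite-dimensional complex inner product space with dim H ≥ 2. There is no unitary (linear isometric) map U : H ⊗ H → H ⊗ H together with a unit vector e ∈ H (the 'blank' ancilla) such that U (ψ ⊗ e) = ψ ⊗ ψ for every unit vector ψ ∈ H. -/
open scoped TensorProduct

/-- **No-cloning theorem, unitary form.** Let `H` be a finite-dimensional complex inner
product space of dimension at least 2. There is no unitary (inner-product-preserving linear)
map `U : H ⊗ H → H ⊗ H` together with a unit "blank" vector `e ∈ H` such that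
`U (ψ ⊗ e) = ψ ⊗ ψ` for every unit vector `ψ ∈ H`. Here `B` is the inner product of the
Hilbert-space tensor product `H ⊗ H`: it is the unique sesquilinear form (conjugate-linear
in the first slot) satisfying `B (a ⊗ b) (c ⊗ d) = ⟨a,c⟩ * ⟨b,d⟩`. -/
theorem no_cloning_unitary {H : Type*} [NormedAddCommGroup H] [InnerProductSpace ℂ H]
    [FiniteDimensional ℂ H] (hdim : 2 ≤ Module.finrank ℂ H) :
    ¬ ∃ (B : TensorProduct ℂ H H → TensorProduct ℂ H H → ℂ)
        (U : TensorProduct ℂ H H →ₗ[ℂ] TensorProduct ℂ H H) (e : H),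
      (∀ x y z, B (x + y) z = B x z + B y z) ∧
      (∀ x y z, B x (y + z) = B x y + B x z) ∧
      (∀ (c : ℂ) x y, B (c • x) y = star c * B x y) ∧
      (∀ (c : ℂ) x y, B x (c • y) = c * B x y) ∧
      (∀ a b c d : H, B (a ⊗ₜ[ℂ] b) (c ⊗ₜ[ℂ] d) = (inner ℂ a c : ℂ) * (inner ℂ b d : ℂ)) ∧
      (∀ x y, B (U x) (U y) = B x y) ∧
      ‖e‖ = 1 ∧
      (∀ ψ : H, ‖ψ‖ = 1 → U (ψ ⊗ₜ[ℂ] e) = ψ ⊗ₜ[ℂ] ψ) := by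
  rintro ⟨B, U, e, -, -, -, -, hBt, hU, he, hclone⟩
  set b := stdOrthonormalBasis ℂ H
  have h0 : (0 : ℕ) < Module.finrank ℂ H := by omega
  have h1' : (1 : ℕ) < Module.finrank ℂ H := by omega
  set u := b ⟨0, h0⟩ with hu
  set v := b ⟨1, h1'⟩ with hv
  have horth : (inner ℂ u v : ℂ) = 0 := by
    have := b.orthonormal.2 (i := ⟨0, h0⟩) (j := ⟨1, h1'⟩) (by simp)
    simpa [hu, hv] using this
  have hnu : ‖u‖ = 1 := b.orthonormal.1 _
  have hnv : ‖v‖ = 1 := b.orthonormal.1 _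
  have huu : (inner ℂ u u : ℂ) = 1 := by
    rw [inner_self_eq_norm_sq_to_K, hnu]; norm_num
  have hee : (inner ℂ e e : ℂ) = 1 := by
    rw [inner_self_eq_norm_sq_to_K, he]; norm_num
  set c : ℂ := ((Real.sqrt 2 : ℝ) : ℂ)⁻¹ with hc
  set ψ : H := c • (u + v) with hψ
  have hsum_sq : ‖u + v‖ ^ 2 = 2 := by
    have hre : RCLike.re (inner ℂ u v : ℂ) = 0 := by rw [horth]; simp
    rw [norm_add_sq (𝕜 := ℂ) u v, hre, hnu, hnv]; ring
  have hnsum : ‖u + v‖ = Real.sqrt 2 := by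
    rw [← hsum_sq, Real.sqrt_sq (norm_nonneg _)]
  have hnc : ‖c‖ = (Real.sqrt 2)⁻¹ := by
    rw [hc, norm_inv, Complex.norm_real, Real.norm_eq_abs, abs_of_nonneg (Real.sqrt_nonneg 2)]
  have hnψ : ‖ψ‖ = 1 := by
    rw [hψ, norm_smul, hnc, hnsum]
    exact inv_mul_cancel₀ (by positivity)
  have huψ : (inner ℂ u ψ : ℂ) = c := by
    rw [hψ, inner_smul_right, inner_add_right, huu, horth]; ring
  have key := hU (u ⊗ₜ[ℂ] e) (ψ ⊗ₜ[ℂ] e)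
  rw [hclone u hnu, hclone ψ hnψ, hBt, hBt, huψ, hee, mul_one] at key
  have hcne : c ≠ 0 := by
    rw [hc]
    simp only [ne_eq, inv_eq_zero, Complex.ofReal_eq_zero]
    positivity
  have hc1 : c = 1 := by
    have : c * c = c * 1 := by rw [mul_one]; exact key
    exact mul_left_cancel₀ hcne this
  have hs1 : Real.sqrt 2 = 1 := by
    rw [hc, inv_eq_one] at hc1
    exact_mod_cast hc1
  have : (2 : ℝ) = 1 := by
    nlinarith [Real.sq_sqrt (show (0:ℝ) ≤ 2 by norm_num), hs1]
  norm_num at this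
end

section
/- Let H be a complex inner product space, let U : H ⊗ H → H ⊗ H be a unitary (inner-product-preserving linear) map, let e ∈ H be a unit vector, and let ψ, φ ∈ H be unit vectors with U (ψ ⊗ e) = ψ ⊗ ψ and U (φ ⊗ e) = φ ⊗ φ. Then either ⟨ψ, φ⟩ = 0 or ψ = φ. (Unitarity gives ⟨ψ, φ⟩ = ⟨ψ, φ⟩², so ⟨ψ, φ⟩ ∈ {0, 1}, and ⟨ψ, φ⟩ = 1 for unit vectors forces ψ = φ.) -/
open scoped TensorProduct

/-- **Distinct non-orthogonal states cannot both be cloned.** Let `H` be a complex inner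
product space, let `B` be the inner product of the Hilbert-space tensor product `H ⊗ H`,
i.e. the sesquilinear form (conjugate-linear in the first slot) with
`B (a ⊗ b) (c ⊗ d) = ⟨a,c⟩ * ⟨b,d⟩`, and let `U : H ⊗ H → H ⊗ H` be a unitary
(inner-product-preserving linear) map. If `e, ψ, φ` are unit vectors with
`U (ψ ⊗ e) = ψ ⊗ ψ` and `U (φ ⊗ e) = φ ⊗ φ`, then `⟨ψ, φ⟩ = 0` or `ψ = φ`. -/
theorem cloned_states_orthogonal_or_equal {H : Type*} [NormedAddCommGroup H]
    [InnerProductSpace ℂ H]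
    (B : TensorProduct ℂ H H → TensorProduct ℂ H H → ℂ)
    (U : TensorProduct ℂ H H →ₗ[ℂ] TensorProduct ℂ H H)
    (hBaddl : ∀ x y z, B (x + y) z = B x z + B y z)
    (hBaddr : ∀ x y z, B x (y + z) = B x y + B x z)
    (hBsmull : ∀ (c : ℂ) x y, B (c • x) y = star c * B x y)
    (hBsmulr : ∀ (c : ℂ) x y, B x (c • y) = c * B x y)
    (hBtmul : ∀ a b c d : H, B (a ⊗ₜ[ℂ] b) (c ⊗ₜ[ℂ] d) = (inner ℂ a c : ℂ) * (inner ℂ b d : ℂ))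
    (hU : ∀ x y, B (U x) (U y) = B x y)
    (e ψ φ : H) (he : ‖e‖ = 1) (hψ : ‖ψ‖ = 1) (hφ : ‖φ‖ = 1)
    (hcloneψ : U (ψ ⊗ₜ[ℂ] e) = ψ ⊗ₜ[ℂ] ψ) (hcloneφ : U (φ ⊗ₜ[ℂ] e) = φ ⊗ₜ[ℂ] φ) :
    (inner ℂ ψ φ : ℂ) = 0 ∨ ψ = φ := by
  have key := hU (ψ ⊗ₜ[ℂ] e) (φ ⊗ₜ[ℂ] e)
  rw [hcloneψ, hcloneφ, hBtmul, hBtmul] at key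
  have hee : (inner ℂ e e : ℂ) = 1 := by
    rw [inner_self_eq_norm_sq_to_K, he]; norm_num
  rw [hee, mul_one] at key
  set c : ℂ := inner ℂ ψ φ with hc
  have : c * (c - 1) = 0 := by ring_nf; linear_combination key
  rcases mul_eq_zero.mp this with h | h
  · exact Or.inl h
  · right
    have hc1 : c = 1 := sub_eq_zero.mp h
    exact (inner_eq_one_iff_of_norm_eq_one hψ hφ).mp hc1
end

section
/- Let H be a complex inner product space, let ψ ∈ H be a unit vector, let P : H → H be an orthogonal projection (a self-adjoint idempotent linear map), and suppose ‖P ψ‖² ≥ 1 − ε for some 0 ≤ ε < 1. Then the normalized post-measurement state φ = (‖Pψ‖)⁻¹ • Pψ satisfies ‖ψ − φ‖ ≤ √(2ε). (Indeed ⟨ψ, Pψ⟩ = ‖Pψ‖², so ‖ψ − φ‖² = 2 − 2‖Pψ‖ ≤ 2ε.) -/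
/-- **"Almost as good as new" lemma for pure states** (Aaronson, Lemma 4). Let `H` be a
complex inner product space, `ψ ∈ H` a unit vector, and `P : H → H` an orthogonal projection
(a self-adjoint idempotent linear map). If the measurement outcome corresponding to `P`
occurs with probability `‖P ψ‖² ≥ 1 − ε` where `0 ≤ ε < 1`, then the normalized
post-measurement state `φ = ‖P ψ‖⁻¹ • P ψ` satisfies `‖ψ − φ‖ ≤ √(2ε)`. -/
theorem almost_as_good_as_new {H : Type*} [NormedAddCommGroup H] [InnerProductSpace ℂ H]
    (ψ : H) (hψ : ‖ψ‖ = 1) (P : H →ₗ[ℂ] H)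
    (hidem : ∀ x, P (P x) = P x)
    (hsa : ∀ x y : H, (inner ℂ (P x) y : ℂ) = inner ℂ x (P y))
    (ε : ℝ) (hε0 : 0 ≤ ε) (hε1 : ε < 1) (hP : 1 - ε ≤ ‖P ψ‖ ^ 2) :
    ‖ψ - ‖P ψ‖⁻¹ • P ψ‖ ≤ Real.sqrt (2 * ε) := by
  have hcoe : (‖P ψ‖⁻¹ : ℝ) • P ψ = ((‖P ψ‖ : ℂ))⁻¹ • P ψ := by
    rw [show ((‖P ψ‖ : ℂ))⁻¹ = ((‖P ψ‖⁻¹ : ℝ) : ℂ) by push_cast; ring,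
      Complex.coe_smul]
  rw [hcoe]
  set a : ℝ := ‖P ψ‖ with ha
  have hapos : 0 < a := by
    nlinarith [norm_nonneg (P ψ)]
  -- key: ⟪ψ, Pψ⟫ = ‖Pψ‖²
  have hkey : (inner ℂ ψ (P ψ) : ℂ) = (a : ℂ) ^ 2 := by
    have : (inner ℂ ψ (P ψ) : ℂ) = inner ℂ (P ψ) (P ψ) := by
      rw [hsa, hidem]
    rw [this, inner_self_eq_norm_sq_to_K]
    norm_cast
  have ha1 : a ≤ 1 := by
    have hcs := norm_inner_le_norm (𝕜 := ℂ) ψ (P ψ)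
    rw [hkey, hψ] at hcs
    have : ‖(a : ℂ) ^ 2‖ = a ^ 2 := by
      simp [abs_of_nonneg hapos.le]
    nlinarith [hcs, this ▸ hcs]
  have hane : (a : ℂ) ≠ 0 := by exact_mod_cast hapos.ne'
  have hre : RCLike.re (inner ℂ ψ (((a : ℂ))⁻¹ • P ψ) : ℂ) = a := by
    rw [inner_smul_right, hkey]
    have : ((a : ℂ))⁻¹ * (a : ℂ) ^ 2 = (a : ℂ) := by
      rw [sq, ← mul_assoc, inv_mul_cancel₀ hane, one_mul]
    rw [this]
    simp
  have hnφ : ‖((a : ℂ))⁻¹ • P ψ‖ = 1 := by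
    rw [norm_smul]
    simp [abs_of_nonneg hapos.le, ← ha]
    field_simp
  have hsq : ‖ψ - ((a : ℂ))⁻¹ • P ψ‖ ^ 2 = 2 - 2 * a := by
    rw [@norm_sub_sq ℂ _ _ _ _ ψ (((a : ℂ))⁻¹ • P ψ), hψ, hnφ, hre]
    ring
  have h2 : ‖ψ - ((a : ℂ))⁻¹ • P ψ‖ ^ 2 ≤ 2 * ε := by
    rw [hsq]; nlinarith
  have hgoal : ‖ψ - ((a : ℂ))⁻¹ • P ψ‖ ≤ Real.sqrt (2 * ε) := by
    rw [← Real.sqrt_sq (norm_nonneg _)]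
    exact Real.sqrt_le_sqrt h2
  simpa [ha] using hgoal
end
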